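/- arXiv:1912.09868 — 5 statements merged into one kernel-verified Lean document; each statement's English description precedes it below -/
import Mathlib

section
/- Let (X, μ) be a σ-finite measure space and w : X → [0,∞) a measurable function. For δ ∈ (0,1] define F_δ = {u ∈ L²(μ) : ∫_X w^δ |u|² dμ < ∞}. Then F₁ ⊆ ⋂_{δ∈(0,1)} F_δ, and equality F₁ = ⋂_{δ∈(0,1)} F_δ holds if and only if w is μ-essentially bounded. -/
open MeasureTheory Set

/-- The weighted form domain `F_δ = {u ∈ L²(μ) : ∫ w^δ |u|² dμ < ∞}`. -/
def formDomain {X : Type*} [MeasurableSpace X] (μ : Measure X) (w : X → ℝ)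
    (δ : ℝ) : Set (X → ℝ) :=
  {u | MemLp u 2 μ ∧ Integrable (fun x => w x ^ δ * |u x| ^ 2) μ}

private noncomputable def tt (n : ℕ) : ℝ := Real.exp ((n : ℝ) ^ 2)

private lemma tt_pos (n : ℕ) : 0 < tt n := Real.exp_pos _

private lemma tt_mono : Monotone tt := fun a b hab => by
  unfold tt
  exact Real.exp_le_exp.2 (by
    have : (a:ℝ) ≤ b := Nat.cast_le.2 hab
    nlinarith [Nat.cast_nonneg (α := ℝ) a])

private lemma cast_le_tt (n : ℕ) : (n : ℝ) ≤ tt n := by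
  have h1 : ((n:ℝ))^2 + 1 ≤ tt n := Real.add_one_le_exp _
  nlinarith [sq_nonneg ((n:ℝ) - 1)]

set_option maxHeartbeats 1000000 in
private lemma summable_tt {δ : ℝ} (hδ0 : 0 ≤ δ) (hδ1 : δ < 1) :
    Summable fun n : ℕ => (n : ℝ) * tt (n + 1) ^ δ / tt n := by
  have hr : ‖Real.exp (-1)‖ < 1 := by
    rw [Real.norm_eq_abs, abs_of_pos (Real.exp_pos _)]
    exact Real.exp_lt_one_iff.mpr (by norm_num)
  have hS : Summable (fun n : ℕ => (n : ℝ) * Real.exp (-1) ^ n) := by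
    simpa using summable_pow_mul_geometric_of_norm_lt_one 1 hr
  obtain ⟨N, hN⟩ := exists_nat_ge (4 / (1 - δ))
  have hδ' : 0 < 1 - δ := by linarith
  rw [← summable_nat_add_iff N]
  have hS' : Summable (fun n : ℕ => ((n + N : ℕ) : ℝ) * Real.exp (-1) ^ (n + N)) :=
    (summable_nat_add_iff N).2 hS
  refine hS'.of_nonneg_of_le (fun n => ?_) (fun n => ?_)
  · have := (tt_pos (n + N + 1)).le
    have := (tt_pos (n + N)).le
    positivity
  · set m : ℕ := n + N with hm
    have hmN : (N : ℝ) ≤ (m : ℝ) := Nat.cast_le.2 (by omega)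
    have hm0 : (0:ℝ) ≤ (m:ℝ) := Nat.cast_nonneg m
    have h4 : 4 ≤ (1 - δ) * m := by
      have h1 := (div_le_iff₀ hδ').1 hN
      have h2 : (1 - δ) * N ≤ (1 - δ) * m := mul_le_mul_of_nonneg_left hmN hδ'.le
      linarith
    have hm4 : (4:ℝ) ≤ (m:ℝ) := by
      have : (1 - δ) * m ≤ 1 * m := mul_le_mul_of_nonneg_right (by linarith) hm0
      linarith
    have hq : δ * ((m:ℝ) + 1) ^ 2 ≤ (m:ℝ)^2 - m := by
      have key : 4 * (m:ℝ) ≤ (1 - δ) * m * m := mul_le_mul_of_nonneg_right h4 hm0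
      have key2 : 4*(m:ℝ) ≤ (m:ℝ)^2 - δ*(m:ℝ)^2 := by linear_combination key
      have p1 : δ * (m:ℝ) ≤ (m:ℝ) := by
        have := mul_le_mul_of_nonneg_right hδ1.le hm0
        linarith
      have goal' : δ*((m:ℝ)+1)^2 = δ*(m:ℝ)^2 + 2*(δ*(m:ℝ)) + δ := by ring
      rw [goal']
      linarith
    have hpow : tt (m + 1) ^ δ = Real.exp (δ * ((m:ℝ) + 1) ^ 2) := by
      rw [tt, Real.rpow_def_of_pos (Real.exp_pos _), Real.log_exp, Nat.cast_add,
        Nat.cast_one, mul_comm]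
    have hexp : Real.exp (-1) ^ m = Real.exp (-(m:ℝ)) := by
      rw [← Real.exp_nat_mul]; ring_nf
    show (m:ℝ) * tt (m + 1) ^ δ / tt m ≤ (m:ℝ) * Real.exp (-1) ^ m
    rw [hpow, hexp, tt, mul_div_assoc, ← Real.exp_sub]
    exact mul_le_mul_of_nonneg_left (Real.exp_le_exp.2 (by linarith)) (Nat.cast_nonneg m)

set_option maxHeartbeats 1000000 in
private lemma exists_bad_u {X : Type*} [MeasurableSpace X] (μ : Measure X) [SigmaFinite μ]
    (w : X → ℝ) (hw_meas : Measurable w) (hw_nonneg : ∀ x, 0 ≤ w x)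
    (hub : ∀ C : ℝ, μ {x | C < w x} ≠ 0) :
    ∃ u : X → ℝ, u ∈ (⋂ δ ∈ Set.Ioo (0 : ℝ) 1, formDomain μ w δ) ∧ u ∉ formDomain μ w 1 := by
  classical
  -- annuli
  set A : ℕ → Set X := fun n => w ⁻¹' Set.Ioc (tt n) (tt (n + 1)) with hA
  have hAmeas : ∀ n, MeasurableSet (A n) := fun n => hw_meas measurableSet_Ioc
  have hAmem : ∀ n x, x ∈ A n ↔ tt n < w x ∧ w x ≤ tt (n + 1) := fun n x => Iff.rfl
  -- infinitely many annuli of positive measure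
  have hgoodA : ∀ N : ℕ, ∃ n, N ≤ n ∧ μ (A n) ≠ 0 := by
    intro N
    by_contra hcon
    push_neg at hcon
    have hz : ∀ n, μ (A (N + n)) = 0 := fun n => hcon (N + n) (Nat.le_add_right N n)
    have hsub : {x | tt N < w x} ⊆ ⋃ n, A (N + n) := by
      intro x hx
      simp only [Set.mem_setOf_eq] at hx
      set P : ℕ → Prop := fun n => tt n < w x with hP
      have hbd : ∀ m, P m → m < ⌈w x⌉₊ := by
        intro m hm
        exact Nat.lt_ceil.2 (lt_of_le_of_lt (cast_le_tt m) hm)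
      set b : ℕ := N + ⌈w x⌉₊ with hb
      have hNb : N ≤ b := Nat.le_add_right _ _
      set k : ℕ := Nat.findGreatest P b with hk
      have hkP : P k := Nat.findGreatest_spec hNb hx
      have hkN : N ≤ k := Nat.le_findGreatest hNb hx
      have hknot : ¬ P (k + 1) := by
        refine Nat.findGreatest_is_greatest (Nat.lt_succ_self _) ?_
        have := hbd k hkP
        omega
      have hxA : x ∈ A k := ⟨hkP, not_lt.1 hknot⟩
      exact Set.mem_iUnion.2 ⟨k - N, by rwa [Nat.add_sub_cancel' hkN]⟩
    exact hub (tt N) (measure_mono_null hsub (measure_iUnion_null hz))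
  -- finite-measure cores
  have hBex : ∀ n, ∃ B : Set X, MeasurableSet B ∧ B ⊆ A n ∧ (μ (A n) ≠ 0 → μ B ≠ 0) ∧ μ B < ⊤ := by
    intro n
    by_cases h : μ (A n) = 0
    · exact ⟨∅, MeasurableSet.empty, Set.empty_subset _, fun h' => absurd h h', by simp⟩
    · obtain ⟨B, hBm, hBsub, hBpos, hBfin⟩ :=
        MeasureTheory.Measure.exists_subset_measure_lt_top (hAmeas n) (pos_iff_ne_zero.2 h)
      exact ⟨B, hBm, hBsub, fun _ => (pos_iff_ne_zero.1 hBpos), hBfin⟩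
  choose B hBmeas hBsub hBpos hBfin using hBex
  have hgood : ∀ N : ℕ, ∃ n, N ≤ n ∧ μ (B n) ≠ 0 := by
    intro N
    obtain ⟨n, hn, h0⟩ := hgoodA N
    exact ⟨n, hn, hBpos n h0⟩
  -- disjointness
  have hdisj : ∀ m n, m ≠ n → ∀ x, x ∈ B m → x ∈ B n → False := by
    intro m n hmn x hxm hxn
    have h1 := hBsub m hxm
    have h2 := hBsub n hxn
    rw [hAmem] at h1 h2
    rcases Nat.lt_or_ge m n with h | h
    · exact absurd (h1.2.trans_lt (lt_of_le_of_lt (tt_mono h) h2.1)) (lt_irrefl _)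
    · have h' : n < m := lt_of_le_of_ne h (Ne.symm hmn)
      exact absurd (h2.2.trans_lt (lt_of_le_of_lt (tt_mono h') h1.1)) (lt_irrefl _)
  -- coefficients
  set c : ℕ → ℝ := fun n =>
    if μ (B n) = 0 then 0 else (n : ℝ) / (tt n * (μ (B n)).toReal) with hc
  have hc_nonneg : ∀ n, 0 ≤ c n := by
    intro n
    rw [hc]
    by_cases h : μ (B n) = 0
    · simp [h]
    · simp only [h, if_false]
      have := (tt_pos n).le
      positivity
  set G : X → ENNReal := fun x => ∑' n, (B n).indicator (fun _ => ENNReal.ofReal (c n)) x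
    with hG
  have hGmeas : Measurable G :=
    Measurable.ennreal_tsum fun n => measurable_const.indicator (hBmeas n)
  set g : X → ℝ := fun x => (G x).toReal with hg
  have hgmeas : Measurable g := hGmeas.ennreal_toReal
  -- pointwise structure
  have hGspec : ∀ x, (∀ n, x ∉ B n) → G x = 0 := by
    intro x hx
    rw [hG]
    simp only
    convert tsum_zero with n
    exact Set.indicator_of_notMem (hx n) _
  have hGmem : ∀ n x, x ∈ B n → G x = ENNReal.ofReal (c n) := by
    intro n x hx
    rw [hG]
    simp only
    rw [tsum_eq_single n (fun m hm => Set.indicator_of_notMem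
      (fun hxm => hdisj m n hm x hxm hx) _)]
    exact Set.indicator_of_mem hx _
  have hg_nonneg : ∀ x, 0 ≤ g x := fun x => ENNReal.toReal_nonneg
  have hofReal : ∀ x, ENNReal.ofReal (g x) = G x := by
    intro x
    by_cases h : ∃ n, x ∈ B n
    · obtain ⟨n, hn⟩ := h
      rw [hg]; simp only
      rw [hGmem n x hn, ENNReal.toReal_ofReal (hc_nonneg n), ]
    · push_neg at h
      rw [hg]; simp only
      rw [hGspec x h]
      simp
  -- the function u
  set u : X → ℝ := fun x => Real.sqrt (g x) with hu
  have hu_meas : Measurable u := Real.continuous_sqrt.measurable.comp hgmeas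
  have hu_sq : ∀ x, |u x| ^ 2 = g x := by
    intro x
    rw [hu]
    simp only
    rw [abs_of_nonneg (Real.sqrt_nonneg _), Real.sq_sqrt (hg_nonneg x)]
  -- main lintegral formula
  have hlin : ∀ φ : X → ℝ, Measurable φ →
      ∫⁻ x, ENNReal.ofReal (φ x) * G x ∂μ
        = ∑' n, ENNReal.ofReal (c n) * ∫⁻ x in B n, ENNReal.ofReal (φ x) ∂μ := by
    intro φ hφ
    have h1 : ∀ x, ENNReal.ofReal (φ x) * G x
        = ∑' n, (B n).indicator (fun y => ENNReal.ofReal (c n) * ENNReal.ofReal (φ y)) x := by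
      intro x
      rw [hG]
      simp only
      rw [← ENNReal.tsum_mul_left]
      congr 1
      funext n
      by_cases h : x ∈ B n
      · simp [Set.indicator_of_mem h, mul_comm]
      · simp [Set.indicator_of_notMem h]
    simp_rw [h1]
    rw [lintegral_tsum (fun n =>
      (Measurable.indicator (f := fun y => ENNReal.ofReal (c n) * ENNReal.ofReal (φ y)) (measurable_const.mul hφ.ennreal_ofReal) (hBmeas n)).aemeasurable)]
    congr 1
    funext n
    rw [lintegral_indicator (hBmeas n), lintegral_const_mul _ hφ.ennreal_ofReal]
  -- divergence for φ = w
  have hdiv : ∫⁻ x, ENNReal.ofReal (w x) * G x ∂μ = ⊤ := by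
    rw [hlin w hw_meas]
    by_contra h
    obtain ⟨N, hN⟩ := ENNReal.exists_nat_gt h
    obtain ⟨n, hnN, hn0⟩ := hgood N
    have hfin := hBfin n
    have hm0 : 0 < (μ (B n)).toReal := ENNReal.toReal_pos hn0 hfin.ne
    have hcn : c n = (n : ℝ) / (tt n * (μ (B n)).toReal) := by rw [hc]; simp [hn0]
    have hlow : ENNReal.ofReal (tt n) * μ (B n) ≤ ∫⁻ x in B n, ENNReal.ofReal (w x) ∂μ := by
      rw [← setLIntegral_const (B n) (ENNReal.ofReal (tt n))]
      refine setLIntegral_mono hw_meas.ennreal_ofReal fun x hx => ?_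
      exact ENNReal.ofReal_le_ofReal ((hBsub n hx).1.le)
    have hterm : (n : ENNReal) ≤ ENNReal.ofReal (c n) * ∫⁻ x in B n, ENNReal.ofReal (w x) ∂μ := by
      calc (n : ENNReal) = ENNReal.ofReal ((n : ℝ)) := (ENNReal.ofReal_natCast n).symm
        _ = ENNReal.ofReal (c n * tt n * (μ (B n)).toReal) := by
            congr 1
            rw [hcn]
            field_simp [(tt_pos n).ne', hm0.ne']
        _ = ENNReal.ofReal (c n) * ENNReal.ofReal (tt n) * ENNReal.ofReal ((μ (B n)).toReal) := by
            rw [ENNReal.ofReal_mul (mul_nonneg (hc_nonneg n) (tt_pos n).le),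
              ENNReal.ofReal_mul (hc_nonneg n)]
        _ = ENNReal.ofReal (c n) * (ENNReal.ofReal (tt n) * μ (B n)) := by
            rw [ENNReal.ofReal_toReal hfin.ne, mul_assoc]
        _ ≤ _ := mul_le_mul_right hlow _
    have : (N : ENNReal) ≤ ∑' n, ENNReal.ofReal (c n) * ∫⁻ x in B n, ENNReal.ofReal (w x) ∂μ :=
      le_trans (by exact_mod_cast Nat.cast_le.2 hnN) (hterm.trans (ENNReal.le_tsum n))
    exact absurd (lt_of_le_of_lt this hN) (lt_irrefl _)
  -- finiteness with bound sequence
  have hfinlem : ∀ (φ : X → ℝ) (ρ : ℕ → ℝ), Measurable φ → (∀ n, 0 ≤ ρ n) →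
      (∀ n x, x ∈ B n → φ x ≤ ρ n) →
      (Summable fun n : ℕ => (n : ℝ) * ρ n / tt n) →
      ∫⁻ x, ENNReal.ofReal (φ x) * G x ∂μ < ⊤ := by
    intro φ ρ hφ hρ0 hρ hsum
    rw [hlin φ hφ]
    have hterm : ∀ n, ENNReal.ofReal (c n) * ∫⁻ x in B n, ENNReal.ofReal (φ x) ∂μ
        ≤ ENNReal.ofReal ((n : ℝ) * ρ n / tt n) := by
      intro n
      by_cases hn0 : μ (B n) = 0
      · have : c n = 0 := by rw [hc]; simp [hn0]
        simp [this]
      · have hfin := hBfin n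
        have hm0 : 0 < (μ (B n)).toReal := ENNReal.toReal_pos hn0 hfin.ne
        have hcn : c n = (n : ℝ) / (tt n * (μ (B n)).toReal) := by rw [hc]; simp [hn0]
        have hup : ∫⁻ x in B n, ENNReal.ofReal (φ x) ∂μ ≤ ENNReal.ofReal (ρ n) * μ (B n) := by
          rw [← setLIntegral_const (B n) (ENNReal.ofReal (ρ n))]
          exact setLIntegral_mono measurable_const fun x hx =>
            ENNReal.ofReal_le_ofReal (hρ n x hx)
        calc ENNReal.ofReal (c n) * ∫⁻ x in B n, ENNReal.ofReal (φ x) ∂μ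
            ≤ ENNReal.ofReal (c n) * (ENNReal.ofReal (ρ n) * μ (B n)) :=
              mul_le_mul_right hup _
          _ = ENNReal.ofReal (c n) * (ENNReal.ofReal (ρ n) * ENNReal.ofReal ((μ (B n)).toReal)) := by
              rw [ENNReal.ofReal_toReal hfin.ne]
          _ = ENNReal.ofReal (c n * (ρ n * (μ (B n)).toReal)) := by
              rw [ENNReal.ofReal_mul (hc_nonneg n), ENNReal.ofReal_mul (hρ0 n)]
          _ = ENNReal.ofReal ((n : ℝ) * ρ n / tt n) := by
              congr 1
              rw [hcn]
              field_simp [(tt_pos n).ne', hm0.ne']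
    refine lt_of_le_of_lt (ENNReal.tsum_le_tsum hterm) ?_
    rw [← ENNReal.ofReal_tsum_of_nonneg (fun n =>
      div_nonneg (mul_nonneg (Nat.cast_nonneg n) (hρ0 n)) (tt_pos n).le) hsum]
    exact ENNReal.ofReal_lt_top
  -- integrability helper
  have hint : ∀ (φ : X → ℝ) (ρ : ℕ → ℝ), Measurable φ → (∀ x, 0 ≤ φ x) → (∀ n, 0 ≤ ρ n) →
      (∀ n x, x ∈ B n → φ x ≤ ρ n) →
      (Summable fun n : ℕ => (n : ℝ) * ρ n / tt n) →
      Integrable (fun x => φ x * g x) μ := by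
    intro φ ρ hφ hφ0 hρ0 hρ hsum
    refine ⟨(hφ.mul hgmeas).aestronglyMeasurable, ?_⟩
    rw [hasFiniteIntegral_iff_ofReal (Filter.Eventually.of_forall fun x =>
      mul_nonneg (hφ0 x) (hg_nonneg x))]
    have : ∀ x, ENNReal.ofReal (φ x * g x) = ENNReal.ofReal (φ x) * G x := by
      intro x
      rw [ENNReal.ofReal_mul (hφ0 x), hofReal x]
    simp_rw [this]
    exact hfinlem φ ρ hφ hρ0 hρ hsum
  -- summability facts
  have hsum0 : Summable fun n : ℕ => (n : ℝ) * 1 / tt n := by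
    have h := summable_tt (le_refl 0) one_pos
    exact h.congr fun n => by rw [Real.rpow_zero]
  refine ⟨u, ?_, ?_⟩
  · rw [Set.mem_iInter₂]
    intro δ hδ
    obtain ⟨hδ0, hδ1⟩ := hδ
    refine ⟨?_, ?_⟩
    · rw [memLp_two_iff_integrable_sq hu_meas.aestronglyMeasurable]
      have heq : (fun x => u x ^ 2) = fun x => (1:ℝ) * g x := by
        funext x; rw [one_mul, ← hu_sq x, sq_abs]
      rw [heq]
      exact hint (fun _ => 1) (fun _ => 1) measurable_const (fun _ => zero_le_one)
        (fun _ => zero_le_one) (fun n x _ => le_rfl) hsum0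
    · have heq : (fun x => w x ^ δ * |u x| ^ 2) = fun x => (w x ^ δ) * g x := by
        funext x; rw [hu_sq x]
      rw [heq]
      exact hint (fun x => w x ^ δ) (fun n => tt (n+1) ^ δ)
        (hw_meas.pow measurable_const) (fun x => Real.rpow_nonneg (hw_nonneg x) δ)
        (fun n => Real.rpow_nonneg (tt_pos (n+1)).le δ)
        (fun n x hx => Real.rpow_le_rpow (hw_nonneg x) ((hBsub n hx).2) hδ0.le)
        (summable_tt hδ0.le hδ1)
  · rintro ⟨hmem, hintg⟩
    have heq : (fun x => w x ^ (1:ℝ) * |u x| ^ 2) = fun x => w x * g x := by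
      funext x; rw [Real.rpow_one, hu_sq x]
    rw [heq] at hintg
    have h2 := (hasFiniteIntegral_iff_ofReal (Filter.Eventually.of_forall fun x =>
      mul_nonneg (hw_nonneg x) (hg_nonneg x))).1 hintg.2
    have h3 : ∀ x, ENNReal.ofReal (w x * g x) = ENNReal.ofReal (w x) * G x := fun x => by
      rw [ENNReal.ofReal_mul (hw_nonneg x), hofReal x]
    simp_rw [h3] at h2
    rw [hdiv] at h2
    exact absurd h2 (lt_irrefl _)

set_option maxHeartbeats 1000000 in
/-- Spectral-multiplier form of Theorem 1.4: `F₁ ⊆ ⋂_{δ∈(0,1)} F_δ`, with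
equality if and only if `w` is `μ`-essentially bounded. -/
theorem stmt_10 {X : Type*} [MeasurableSpace X] (μ : Measure X) [SigmaFinite μ]
    (w : X → ℝ) (hw_meas : Measurable w) (hw_nonneg : ∀ x, 0 ≤ w x) :
    formDomain μ w 1 ⊆ (⋂ δ ∈ Set.Ioo (0 : ℝ) 1, formDomain μ w δ) ∧
    ((formDomain μ w 1 = ⋂ δ ∈ Set.Ioo (0 : ℝ) 1, formDomain μ w δ) ↔
      ∃ C : ℝ, ∀ᵐ x ∂μ, w x ≤ C) := by
  have habs_int : ∀ u : X → ℝ, MemLp u 2 μ → Integrable (fun x => |u x| ^ 2) μ := by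
    intro u hu2
    have h := (memLp_two_iff_integrable_sq hu2.aestronglyMeasurable).1 hu2
    simpa [sq_abs] using h
  have habs_meas : ∀ u : X → ℝ, AEStronglyMeasurable u μ →
      AEStronglyMeasurable (fun x => |u x| ^ 2) μ := by
    intro u hu
    have h1 : AEStronglyMeasurable (fun x => |u x|) μ := by
      simpa [Real.norm_eq_abs] using hu.norm
    have : (fun x => |u x| ^ 2) = fun x => |u x| * |u x| := by funext x; ring
    rw [this]
    exact h1.mul h1
  have hsub : formDomain μ w 1 ⊆ ⋂ δ ∈ Set.Ioo (0 : ℝ) 1, formDomain μ w δ := by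
    rintro u ⟨hu2, hu1⟩
    have hsq : Integrable (fun x => |u x| ^ 2) μ := habs_int u hu2
    have hu1' : Integrable (fun x => w x * |u x| ^ 2) μ := by
      simpa [Real.rpow_one] using hu1
    rw [Set.mem_iInter₂]
    intro δ hδ
    refine ⟨hu2, ?_⟩
    refine Integrable.mono' (hsq.add hu1')
      ((hw_meas.pow measurable_const).aestronglyMeasurable.mul
        (habs_meas u hu2.aestronglyMeasurable))
      (Filter.Eventually.of_forall fun x => ?_)
    have h0 : 0 ≤ w x ^ δ * |u x| ^ 2 :=
      mul_nonneg (Real.rpow_nonneg (hw_nonneg x) δ) (by positivity)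
    rw [Real.norm_eq_abs, abs_of_nonneg h0]
    have hb : w x ^ δ ≤ 1 + w x := by
      rcases le_or_gt (w x) 1 with h | h
      · have := Real.rpow_le_one (hw_nonneg x) h hδ.1.le
        linarith [hw_nonneg x]
      · have h2 : w x ^ δ ≤ w x ^ (1:ℝ) := Real.rpow_le_rpow_of_exponent_le h.le hδ.2.le
        rw [Real.rpow_one] at h2
        linarith
    calc w x ^ δ * |u x| ^ 2 ≤ (1 + w x) * |u x| ^ 2 :=
          mul_le_mul_of_nonneg_right hb (by positivity)
      _ = |u x| ^ 2 + w x * |u x| ^ 2 := by ring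
  refine ⟨hsub, ?_, ?_⟩
  · intro heq
    by_contra hC
    push_neg at hC
    have hub : ∀ C : ℝ, μ {x | C < w x} ≠ 0 := by
      intro C
      have h := hC C
      rw [Filter.Frequently, MeasureTheory.ae_iff] at h
      simpa [not_le] using h
    obtain ⟨u, huI, huF⟩ := exists_bad_u μ w hw_meas hw_nonneg hub
    rw [← heq] at huI
    exact huF huI
  · rintro ⟨C, hC⟩
    refine Subset.antisymm hsub ?_
    intro u hu
    obtain ⟨hu2, -⟩ := Set.mem_iInter₂.1 hu (1/2 : ℝ) ⟨by norm_num, by norm_num⟩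
    refine ⟨hu2, ?_⟩
    have hsq : Integrable (fun x => |u x| ^ 2) μ := habs_int u hu2
    refine Integrable.mono' (hsq.const_mul (max C 0))
      ((hw_meas.pow measurable_const).aestronglyMeasurable.mul
        (habs_meas u hu2.aestronglyMeasurable)) ?_
    filter_upwards [hC] with x hx
    have h0 : 0 ≤ w x ^ (1:ℝ) * |u x| ^ 2 :=
      mul_nonneg (Real.rpow_nonneg (hw_nonneg x) 1) (by positivity)
    rw [Real.norm_eq_abs, abs_of_nonneg h0, Real.rpow_one]
    exact mul_le_mul_of_nonneg_right (hx.trans (le_max_left C 0)) (by positivity)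
end

section
/- For every unbounded subset S of [0,∞) there exist a sequence (λ_k)_{k≥0} of elements of S and positive real numbers (c_k)_{k≥0} such that Σ_{k} c_k < ∞, Σ_{k} c_k λ_k = ∞, and Σ_{k} c_k λ_k^δ < ∞ for every δ ∈ (0,1). -/
open Set

/-- For every unbounded subset `S` of `[0,∞)` there are `λ_k ∈ S` and weights
`c_k > 0` with `Σ c_k < ∞`, `Σ c_k λ_k = ∞`, and `Σ c_k λ_k^δ < ∞` for every
`δ ∈ (0,1)`. -/
theorem stmt_11 (S : Set ℝ) (hS : S ⊆ Set.Ici (0 : ℝ)) (hunb : ¬BddAbove S) :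
    ∃ (lam : ℕ → ℝ) (c : ℕ → ℝ),
      (∀ k, lam k ∈ S) ∧ (∀ k, 0 < c k) ∧
      Summable c ∧
      ¬Summable (fun k => c k * lam k) ∧
      ∀ δ ∈ Set.Ioo (0 : ℝ) 1, Summable (fun k => c k * lam k ^ δ) := by
  have h : ∀ k : ℕ, ∃ y ∈ S, (2:ℝ)^k < y := fun k => not_bddAbove_iff.mp hunb ((2:ℝ)^k)
  choose lam hmem hlt using h
  have hlam_pos : ∀ k, 0 < lam k := fun k => lt_trans (by positivity) (hlt k)
  have hlam_ge : ∀ k, (2:ℝ)^k ≤ lam k := fun k => (hlt k).le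
  refine ⟨lam, fun k => 1/((k+1) * lam k), hmem, fun k => by have := hlam_pos k; positivity, ?_, ?_, ?_⟩
  · have hg : Summable (fun k : ℕ => ((1:ℝ)/2)^k) :=
      summable_geometric_of_lt_one (by norm_num) (by norm_num)
    refine hg.of_nonneg_of_le (fun k => by have := hlam_pos k; positivity) (fun k => ?_)
    have h1 : (2:ℝ)^k ≤ ((k:ℝ)+1) * lam k := by
      calc (2:ℝ)^k ≤ lam k := hlam_ge k
        _ = 1 * lam k := (one_mul _).symm
        _ ≤ ((k:ℝ)+1) * lam k := by
            apply mul_le_mul_of_nonneg_right _ (hlam_pos k).le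
            linarith [Nat.cast_nonneg (α := ℝ) k]
    calc 1/(((k:ℝ)+1) * lam k) ≤ 1/(2:ℝ)^k :=
          one_div_le_one_div_of_le (by positivity) h1
      _ = ((1:ℝ)/2)^k := by rw [one_div_pow]
  · have heq : (fun k : ℕ => 1/(((k:ℝ)+1) * lam k) * lam k)
        = fun k : ℕ => 1/((k:ℝ)+1) := by
      funext k
      have := (hlam_pos k).ne'
      field_simp
    rw [heq]
    intro hs
    have h2 : Summable (fun n : ℕ => 1/(n:ℝ)) := by
      rw [← summable_nat_add_iff 1]
      simpa using hs
    exact Real.not_summable_one_div_natCast h2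
  · rintro δ ⟨hδ0, hδ1⟩
    have hr0 : (0:ℝ) < (2:ℝ)^(δ-1) := Real.rpow_pos_of_pos (by norm_num) _
    have hg : Summable (fun k : ℕ => ((2:ℝ)^(δ-1))^k) :=
      summable_geometric_of_lt_one hr0.le
        (Real.rpow_lt_one_of_one_lt_of_neg (by norm_num) (by linarith))
    refine hg.of_nonneg_of_le (fun k => by have := hlam_pos k; positivity) (fun k => ?_)
    have hb : lam k ^ δ ≤ ((k:ℝ)+1) * lam k * lam k ^ (δ-1) := by
      have h1 : lam k ^ (δ-1) = lam k ^ δ / lam k :=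
        Real.rpow_sub_one (hlam_pos k).ne' δ
      rw [h1]
      have h2 : ((k:ℝ)+1) * lam k * (lam k ^ δ / lam k) = ((k:ℝ)+1) * lam k ^ δ := by
        have hne := (hlam_pos k).ne'
        field_simp
      rw [h2]
      nlinarith [Real.rpow_nonneg (hlam_pos k).le δ, Nat.cast_nonneg (α := ℝ) k]
    calc 1/(((k:ℝ)+1) * lam k) * lam k ^ δ
        = lam k ^ δ / (((k:ℝ)+1) * lam k) := by ring
      _ ≤ lam k ^ (δ-1) := by
          rw [div_le_iff₀ (by have := hlam_pos k; positivity)]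
          calc lam k ^ δ ≤ ((k:ℝ)+1) * lam k * lam k ^ (δ-1) := hb
            _ = lam k ^ (δ-1) * (((k:ℝ)+1) * lam k) := by ring
      _ ≤ ((2:ℝ)^k) ^ (δ-1) :=
          Real.rpow_le_rpow_of_nonpos (by positivity) (hlam_ge k) (by linarith)
      _ = ((2:ℝ)^(δ-1))^k := by
          rw [← Real.rpow_natCast ((2:ℝ)^(δ-1)) k, ← Real.rpow_natCast (2:ℝ) k,
            ← Real.rpow_mul (by norm_num), ← Real.rpow_mul (by norm_num), mul_comm]
end

section
/- Let (K, d, ν) be a metric measure space, α > 0, and C ≥ 1 a constant with (1/C)·r^α ≤ ν(B(x,r)) ≤ C·r^α for every x ∈ K and every r ∈ (0, diam K), where B(x,r) is the open ball and diam K ∈ (0, ∞] is the diameter of K. Let c = 2·C^{2/α}. Then for every x ∈ K and every r ∈ (0, diam K / c), the annulus B(x, c·r) \ B(x, r) is nonempty. -/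
open MeasureTheory Metric Set

/-- The annulus lemma: in an `α`-regular metric measure space with regularity
constant `C ≥ 1`, every annulus `B(x, c·r) \ B(x, r)` with `c = 2·C^{2/α}` and
`0 < r`, `c·r < diam K`, is nonempty. -/
theorem stmt_12 {K : Type*} [MetricSpace K] [MeasurableSpace K] [BorelSpace K] [LocallyCompactSpace K]
    [TopologicalSpace.SeparableSpace K]
    (ν : Measure K) [IsFiniteMeasureOnCompacts ν] [ν.IsOpenPosMeasure]
    (α : ℝ) (hα : 0 < α) (C : ℝ) (hC : 1 ≤ C)
    (hreg : ∀ (x : K) (r : ℝ), 0 < r →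
      ENNReal.ofReal r < EMetric.diam (Set.univ : Set K) →
      ENNReal.ofReal ((1 / C) * r ^ α) ≤ ν (Metric.ball x r) ∧
        ν (Metric.ball x r) ≤ ENNReal.ofReal (C * r ^ α)) :
    ∀ (x : K) (r : ℝ), 0 < r →
      ENNReal.ofReal (2 * C ^ (2 / α) * r) < EMetric.diam (Set.univ : Set K) →
      (Metric.ball x (2 * C ^ (2 / α) * r) \ Metric.ball x r).Nonempty := by
  intro x r hr hdiam
  have hC0 : (0:ℝ) < C := lt_of_lt_of_le one_pos hC
  have hCp : (1:ℝ) ≤ C ^ (2 / α) := Real.one_le_rpow hC (by positivity)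
  set c : ℝ := 2 * C ^ (2 / α) with hc
  have hc1 : (1:ℝ) < c := by nlinarith
  have hcr : r < c * r := by nlinarith
  by_contra h
  rw [Set.not_nonempty_iff_eq_empty, diff_eq_empty] at h
  have heq : ν (ball x (c * r)) = ν (ball x r) :=
    le_antisymm (measure_mono h) (measure_mono (ball_subset_ball hcr.le))
  have h1 := (hreg x (c * r) (by positivity) hdiam).1
  have h2 := (hreg x r hr (lt_of_le_of_lt (ENNReal.ofReal_le_ofReal hcr.le) hdiam)).2
  have key : ENNReal.ofReal ((1 / C) * (c * r) ^ α) ≤ ENNReal.ofReal (C * r ^ α) :=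
    h1.trans (heq ▸ h2)
  rw [ENNReal.ofReal_le_ofReal_iff (by positivity)] at key
  have hcalc : (1 / C) * (c * r) ^ α = 2 ^ α * C * r ^ α := by
    rw [hc, Real.mul_rpow (by positivity) hr.le,
      Real.mul_rpow (by positivity) (by positivity),
      ← Real.rpow_mul hC0.le, div_mul_cancel₀ _ hα.ne', Real.rpow_two]
    field_simp
  rw [hcalc] at key
  have h2a : (1:ℝ) < (2:ℝ) ^ α := Real.one_lt_rpow one_lt_two hα
  have hrp : (0:ℝ) < r ^ α := Real.rpow_pos_of_pos hr α
  nlinarith [mul_pos hC0 hrp]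
end

section
/- Let α > 0, β > 1, δ ∈ (0,1), C₃ > 0, C₄ > 0, T ∈ (0,∞), and D ∈ (0, T]. Let p : (0,∞) → [0,∞) be measurable and suppose p(t) ≤ C₃·t^{−α/β}·exp(−C₄·(D·t^{−1/β})^{β/(β−1)}) for all t ∈ (0, T^β), and p(t) ≤ C₃·T^{−α} for all t ≥ T^β. Then ∫_0^∞ t^{−(1+δ)} p(t) dt ≤ C·D^{−(α+δβ)}, where C is a constant depending only on α, β, δ, C₃, C₄. -/
open MeasureTheory Real Set ENNReal

/-- Upper bound for the subordinated jumping kernel integral in case (a)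
(bounded diameter): if `p(t) ≤ C₃·t^{−α/β}·exp(−C₄·(D·t^{−1/β})^{β/(β−1)})`
for `t ∈ (0, T^β)` and `p(t) ≤ C₃·T^{−α}` for `t ≥ T^β`, then
`∫_0^∞ t^{−(1+δ)} p(t) dt ≤ C·D^{−(α+δβ)}` with `C = C(α,β,δ,C₃,C₄)`. -/
theorem stmt_18 (α β δ C₃ C₄ : ℝ) (hα : 0 < α) (hβ : 1 < β)
    (hδ : δ ∈ Set.Ioo (0 : ℝ) 1) (hC₃ : 0 < C₃) (hC₄ : 0 < C₄) :
    ∃ C : ℝ, 0 < C ∧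
      ∀ (T D : ℝ) (p : ℝ → ℝ), 0 < T → 0 < D → D ≤ T →
        Measurable p → (∀ t, 0 ≤ p t) →
        (∀ t ∈ Set.Ioo (0 : ℝ) (T ^ β),
          p t ≤ C₃ * t ^ (-(α / β)) * Real.exp (-(C₄ * (D * t ^ (-(1 / β))) ^ (β / (β - 1))))) →
        (∀ t, T ^ β ≤ t → p t ≤ C₃ * T ^ (-α)) →
        (∫⁻ t in Set.Ioi (0 : ℝ), ENNReal.ofReal (t ^ (-(1 + δ)) * p t))
          ≤ ENNReal.ofReal (C * D ^ (-(α + δ * β))) := by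
  obtain ⟨hδ0, hδ1⟩ := hδ
  have hβ0 : (0:ℝ) < β := by linarith
  have hβ1 : (0:ℝ) < β - 1 := by linarith
  have hαβ : 0 < α / β := div_pos hα hβ0
  set a : ℝ := 1 + δ + α / β with ha
  have ha1 : 1 < a := by simp only [ha]; linarith
  set n : ℕ := ⌈(β - 1) * a⌉₊ with hn
  have hna : (β - 1) * a ≤ (n:ℝ) := Nat.le_ceil _
  set θ : ℝ := (n:ℝ) / (β - 1) - a with hθ
  have hθ0 : 0 ≤ θ := by
    rw [hθ, sub_nonneg, le_div_iff₀ hβ1]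
    linarith [hna]
  set C₁ : ℝ := C₃ * (Nat.factorial n : ℝ) / C₄ ^ n with hC₁
  set C₂ : ℝ := C₃ / (a - 1) with hC₂
  have hC₁0 : 0 < C₁ := by
    apply div_pos (mul_pos hC₃ _) (pow_pos hC₄ n)
    exact_mod_cast Nat.factorial_pos n
  have hC₂0 : 0 < C₂ := div_pos hC₃ (by linarith)
  have hC₅0 : 0 < C₃ / δ := div_pos hC₃ hδ0
  refine ⟨C₁ + C₂ + C₃ / δ, by linarith, ?_⟩
  intro T D p hT hD hDT hmeas hp0 hbound1 hbound2
  have hDβ : 0 < D ^ β := rpow_pos_of_pos hD β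
  have hTβ : 0 < T ^ β := rpow_pos_of_pos hT β
  have hDT' : D ^ β ≤ T ^ β := rpow_le_rpow hD.le hDT hβ0.le
  -- split the domain
  have hsplit : Ioi (0:ℝ) = Ioo 0 (D^β) ∪ Ici (D^β) := by
    ext x
    simp only [mem_Ioi, mem_union, mem_Ioo, mem_Ici]
    constructor
    · intro hx
      rcases lt_or_ge x (D^β) with h | h
      · exact Or.inl ⟨hx, h⟩
      · exact Or.inr h
    · rintro (⟨h, _⟩ | h)
      · exact h
      · linarith
  have hsplit2 : Ici (D^β) = Ico (D^β) (T^β) ∪ Ici (T^β) := (Ico_union_Ici_eq_Ici hDT').symm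
  -- Part 1 : pointwise bound on (0, D^β)
  set K : ℝ := C₁ * D ^ (-(α + δ * β) - β) with hK
  have key1 : ∀ t ∈ Ioo (0:ℝ) (D^β), t ^ (-(1+δ)) * p t ≤ K := by
    rintro t ⟨ht0, htD⟩
    have htT : t ∈ Ioo (0:ℝ) (T^β) := ⟨ht0, lt_of_lt_of_le htD hDT'⟩
    set x : ℝ := D * t ^ (-(1/β)) with hx
    have hx0 : 0 < x := mul_pos hD (rpow_pos_of_pos ht0 _)
    set s : ℝ := C₄ * x ^ (β/(β-1)) with hs
    have hs0 : 0 < s := mul_pos hC₄ (rpow_pos_of_pos hx0 _)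
    have hexp : Real.exp (-s) ≤ (Nat.factorial n : ℝ) / s ^ n := by
      have h1 : s ^ n / (Nat.factorial n : ℝ) ≤ Real.exp s :=
        Real.pow_div_factorial_le_exp s hs0.le n
      have h2 : (0:ℝ) < s ^ n / (Nat.factorial n : ℝ) := by positivity
      rw [Real.exp_neg, ← inv_div]
      exact inv_anti₀ h2 h1
    have hexpo : -(1/β) * (β/(β-1) * (n:ℝ)) = -((n:ℝ)/(β-1)) := by
      field_simp
    have hxq : (x ^ (β/(β-1))) ^ n = D ^ ((β/(β-1)) * n) * t ^ (-((n:ℝ)/(β-1))) := by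
      rw [← Real.rpow_natCast (x ^ (β/(β-1))) n, ← Real.rpow_mul hx0.le, hx,
        Real.mul_rpow hD.le (Real.rpow_nonneg ht0.le _), ← Real.rpow_mul ht0.le, hexpo]
    have hsn : s ^ n = C₄ ^ n * (D ^ ((β/(β-1)) * n) * t ^ (-((n:ℝ)/(β-1)))) := by
      rw [hs, mul_pow, hxq]
    have step1 : t ^ (-(1+δ)) * p t ≤ t ^ (-(1+δ)) * (C₃ * t ^ (-(α/β)) * ((Nat.factorial n : ℝ) / s ^ n)) := by
      apply mul_le_mul_of_nonneg_left _ (Real.rpow_nonneg ht0.le _)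
      calc p t ≤ C₃ * t ^ (-(α / β)) * Real.exp (-(C₄ * (D * t ^ (-(1 / β))) ^ (β / (β - 1)))) :=
            hbound1 t htT
        _ ≤ C₃ * t ^ (-(α/β)) * ((Nat.factorial n : ℝ) / s ^ n) := by
            apply mul_le_mul_of_nonneg_left _ (by positivity)
            exact hexp
    have step2 : t ^ (-(1+δ)) * (C₃ * t ^ (-(α/β)) * ((Nat.factorial n : ℝ) / s ^ n))
        = C₁ * D ^ (-((β/(β-1)) * n)) * t ^ θ := by
      rw [hsn, Real.rpow_neg hD.le ((β/(β-1)) * n), Real.rpow_neg ht0.le ((n:ℝ)/(β-1))]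
      have htθ : t ^ θ = t ^ (-(1+δ)) * t ^ (-(α/β)) * t ^ ((n:ℝ)/(β-1)) := by
        rw [← Real.rpow_add ht0, ← Real.rpow_add ht0]
        congr 1
        rw [hθ, ha]; ring
      rw [htθ, hC₁]
      have h1 : t ^ ((n:ℝ)/(β-1)) ≠ 0 := (rpow_pos_of_pos ht0 _).ne'
      have h2 : D ^ ((β/(β-1)) * n) ≠ 0 := (rpow_pos_of_pos hD _).ne'
      have h3 : C₄ ^ n ≠ 0 := (pow_pos hC₄ n).ne'
      field_simp
    have h4 : -((β/(β-1)) * (n:ℝ)) + β * θ = -(α + δ * β) - β := by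
      rw [hθ, ha]; field_simp; ring
    have step3 : C₁ * D ^ (-((β/(β-1)) * n)) * t ^ θ ≤ C₁ * D ^ (-((β/(β-1)) * n)) * (D^β) ^ θ := by
      apply mul_le_mul_of_nonneg_left _ (by positivity)
      exact Real.rpow_le_rpow ht0.le htD.le hθ0
    have step4 : C₁ * D ^ (-((β/(β-1)) * n)) * (D^β) ^ θ = K := by
      rw [hK, ← Real.rpow_mul hD.le, mul_assoc, ← Real.rpow_add hD, h4]
    calc t ^ (-(1+δ)) * p t ≤ _ := step1
      _ = _ := step2
      _ ≤ _ := step3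
      _ = K := step4
  have hK0 : 0 ≤ K := by
    rw [hK]; exact le_of_lt (mul_pos hC₁0 (rpow_pos_of_pos hD _))
  have h1 : (∫⁻ t in Ioo (0:ℝ) (D^β), ENNReal.ofReal (t ^ (-(1 + δ)) * p t))
      ≤ ENNReal.ofReal (C₁ * D ^ (-(α + δ * β))) := by
    calc (∫⁻ t in Ioo (0:ℝ) (D^β), ENNReal.ofReal (t ^ (-(1 + δ)) * p t))
        ≤ ∫⁻ _ in Ioo (0:ℝ) (D^β), ENNReal.ofReal K :=
          setLIntegral_mono' measurableSet_Ioo fun t ht => ENNReal.ofReal_le_ofReal (key1 t ht)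
      _ = ENNReal.ofReal K * volume (Ioo (0:ℝ) (D^β)) := setLIntegral_const _ _
      _ = ENNReal.ofReal K * ENNReal.ofReal (D^β) := by rw [Real.volume_Ioo, sub_zero]
      _ = ENNReal.ofReal (K * D^β) := (ENNReal.ofReal_mul hK0).symm
      _ = ENNReal.ofReal (C₁ * D ^ (-(α + δ * β))) := by
          congr 1
          rw [hK, mul_assoc, ← Real.rpow_add hD]
          congr 2
          ring
  -- Part 2a : on [D^β, T^β)
  have h2a : (∫⁻ t in Ico (D^β) (T^β), ENNReal.ofReal (t ^ (-(1 + δ)) * p t))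
      ≤ ENNReal.ofReal (C₂ * D ^ (-(α + δ * β))) := by
    have key2 : ∀ t ∈ Ico (D^β) (T^β), t ^ (-(1+δ)) * p t ≤ C₃ * t ^ (-a) := by
      rintro t ⟨ht1, ht2⟩
      have ht0 : 0 < t := lt_of_lt_of_le hDβ ht1
      have hpt : p t ≤ C₃ * t ^ (-(α/β)) := by
        calc p t ≤ C₃ * t ^ (-(α / β)) *
              Real.exp (-(C₄ * (D * t ^ (-(1 / β))) ^ (β / (β - 1)))) := hbound1 t ⟨ht0, ht2⟩
          _ ≤ C₃ * t ^ (-(α/β)) * 1 := by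
              apply mul_le_mul_of_nonneg_left _ (by positivity)
              rw [Real.exp_le_one_iff]
              have : (0:ℝ) ≤ C₄ * (D * t ^ (-(1 / β))) ^ (β / (β - 1)) :=
                mul_nonneg hC₄.le (Real.rpow_nonneg (by positivity) _)
              linarith
          _ = C₃ * t ^ (-(α/β)) := mul_one _
      calc t ^ (-(1+δ)) * p t ≤ t ^ (-(1+δ)) * (C₃ * t ^ (-(α/β))) :=
            mul_le_mul_of_nonneg_left hpt (Real.rpow_nonneg ht0.le _)
        _ = C₃ * t ^ (-a) := by
            rw [show (-a : ℝ) = -(1+δ) + -(α/β) by rw [ha]; ring, Real.rpow_add ht0]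
            ring
    have hint : IntegrableOn (fun t => C₃ * t ^ (-a)) (Ioi (D^β)) :=
      (integrableOn_Ioi_rpow_of_lt (by linarith) hDβ).const_mul C₃
    calc (∫⁻ t in Ico (D^β) (T^β), ENNReal.ofReal (t ^ (-(1 + δ)) * p t))
        ≤ ∫⁻ t in Ico (D^β) (T^β), ENNReal.ofReal (C₃ * t ^ (-a)) :=
          setLIntegral_mono' measurableSet_Ico fun t ht => ENNReal.ofReal_le_ofReal (key2 t ht)
      _ ≤ ∫⁻ t in Ici (D^β), ENNReal.ofReal (C₃ * t ^ (-a)) :=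
          lintegral_mono_set (Ico_subset_Ici_self)
      _ = ∫⁻ t in Ioi (D^β), ENNReal.ofReal (C₃ * t ^ (-a)) :=
          (setLIntegral_congr MeasureTheory.Ioi_ae_eq_Ici).symm
      _ = ENNReal.ofReal (∫ t in Ioi (D^β), C₃ * t ^ (-a)) := by
          rw [ofReal_integral_eq_lintegral_ofReal hint]
          filter_upwards [ae_restrict_mem measurableSet_Ioi] with t ht
          exact mul_nonneg hC₃.le (Real.rpow_nonneg (le_of_lt (lt_of_lt_of_le hDβ ht.le)) _)
      _ = ENNReal.ofReal (C₂ * D ^ (-(α + δ * β))) := by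
          congr 1
          rw [MeasureTheory.integral_const_mul, integral_Ioi_rpow_of_lt (by linarith) hDβ]
          have hg : (D^β) ^ (-a+1) = D ^ (-(α + δ * β)) := by
            rw [← Real.rpow_mul hD.le]
            congr 1
            rw [ha]; field_simp; ring
          rw [hg, hC₂, show (-a + 1 : ℝ) = -(a - 1) by ring, neg_div_neg_eq]
          ring
  -- Part 2b : on [T^β, ∞)
  have h2b : (∫⁻ t in Ici (T^β), ENNReal.ofReal (t ^ (-(1 + δ)) * p t))
      ≤ ENNReal.ofReal ((C₃ / δ) * D ^ (-(α + δ * β))) := by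
    have key3 : ∀ t ∈ Ici (T^β), t ^ (-(1+δ)) * p t ≤ (C₃ * T ^ (-α)) * t ^ (-(1+δ)) := by
      intro t ht
      have ht0 : 0 < t := lt_of_lt_of_le hTβ ht
      calc t ^ (-(1+δ)) * p t ≤ t ^ (-(1+δ)) * (C₃ * T ^ (-α)) :=
            mul_le_mul_of_nonneg_left (hbound2 t ht) (Real.rpow_nonneg ht0.le _)
        _ = (C₃ * T ^ (-α)) * t ^ (-(1+δ)) := mul_comm _ _
    have hint : IntegrableOn (fun t => (C₃ * T ^ (-α)) * t ^ (-(1+δ))) (Ioi (T^β)) :=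
      (integrableOn_Ioi_rpow_of_lt (by linarith) hTβ).const_mul _
    calc (∫⁻ t in Ici (T^β), ENNReal.ofReal (t ^ (-(1 + δ)) * p t))
        ≤ ∫⁻ t in Ici (T^β), ENNReal.ofReal ((C₃ * T ^ (-α)) * t ^ (-(1+δ))) :=
          setLIntegral_mono' measurableSet_Ici fun t ht => ENNReal.ofReal_le_ofReal (key3 t ht)
      _ = ∫⁻ t in Ioi (T^β), ENNReal.ofReal ((C₃ * T ^ (-α)) * t ^ (-(1+δ))) :=
          (setLIntegral_congr MeasureTheory.Ioi_ae_eq_Ici).symm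
      _ = ENNReal.ofReal (∫ t in Ioi (T^β), (C₃ * T ^ (-α)) * t ^ (-(1+δ))) := by
          rw [ofReal_integral_eq_lintegral_ofReal hint]
          filter_upwards [ae_restrict_mem measurableSet_Ioi] with t ht
          exact mul_nonneg (mul_nonneg hC₃.le (Real.rpow_nonneg hT.le _))
            (Real.rpow_nonneg (le_of_lt (lt_of_lt_of_le hTβ ht.le)) _)
      _ ≤ ENNReal.ofReal ((C₃ / δ) * D ^ (-(α + δ * β))) := by
          apply ENNReal.ofReal_le_ofReal
          rw [MeasureTheory.integral_const_mul, integral_Ioi_rpow_of_lt (by linarith) hTβ]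
          have hg : (T^β) ^ (-(1+δ)+1) = T ^ (-(δ * β)) := by
            rw [← Real.rpow_mul hT.le]
            congr 1
            ring
          rw [hg]
          have heq : C₃ * T ^ (-α) * (-T ^ (-(δ * β)) / (-(1 + δ) + 1))
              = (C₃ / δ) * T ^ (-(α + δ * β)) := by
            rw [show (-(α + δ * β) : ℝ) = -α + -(δ * β) by ring, Real.rpow_add hT]
            have h6 : -(1+δ)+1 = -δ := by ring
            rw [h6]
            field_simp
          rw [heq]
          apply mul_le_mul_of_nonneg_left _ hC₅0.le
          apply Real.rpow_le_rpow_of_nonpos hD hDT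
          have : 0 < α + δ * β := by nlinarith
          linarith
  -- combine
  calc (∫⁻ t in Ioi (0:ℝ), ENNReal.ofReal (t ^ (-(1 + δ)) * p t))
      ≤ (∫⁻ t in Ioo (0:ℝ) (D^β), ENNReal.ofReal (t ^ (-(1 + δ)) * p t))
        + ∫⁻ t in Ici (D^β), ENNReal.ofReal (t ^ (-(1 + δ)) * p t) := by
        rw [hsplit]; exact lintegral_union_le _ _ _
    _ ≤ (∫⁻ t in Ioo (0:ℝ) (D^β), ENNReal.ofReal (t ^ (-(1 + δ)) * p t))
        + ((∫⁻ t in Ico (D^β) (T^β), ENNReal.ofReal (t ^ (-(1 + δ)) * p t))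
          + ∫⁻ t in Ici (T^β), ENNReal.ofReal (t ^ (-(1 + δ)) * p t)) := by
        refine add_le_add le_rfl ?_
        rw [hsplit2]; exact lintegral_union_le _ _ _
    _ ≤ ENNReal.ofReal (C₁ * D ^ (-(α + δ * β)))
        + (ENNReal.ofReal (C₂ * D ^ (-(α + δ * β)))
          + ENNReal.ofReal ((C₃ / δ) * D ^ (-(α + δ * β)))) :=
        add_le_add h1 (add_le_add h2a h2b)
    _ = ENNReal.ofReal ((C₁ + C₂ + C₃ / δ) * D ^ (-(α + δ * β))) := by
        rw [← ENNReal.ofReal_add (by positivity) (by positivity),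
          ← ENNReal.ofReal_add (by positivity) (by positivity)]
        congr 1
        ring
end

section
/- Let α > 0, β > 1, δ ∈ (0,1), C₁ > 0, C₂ > 0, T ∈ (0,∞), and D ∈ (0, T]. Let p : (0,∞) → [0,∞) be measurable and suppose p(t) ≥ C₁·t^{−α/β}·exp(−C₂·(D·t^{−1/β})^{β/(β−1)}) for all t ∈ (0, T^β). Then ∫_0^∞ t^{−(1+δ)} p(t) dt ≥ c·D^{−(α+δβ)}, where c > 0 is a constant depending only on α, β, δ, C₁, C₂ (in particular independent of T and D). -/
open MeasureTheory Real Set ENNReal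

/-- Lower bound for the subordinated jumping kernel integral in case (a)
(bounded diameter): if `p(t) ≥ C₁·t^{−α/β}·exp(−C₂·(D·t^{−1/β})^{β/(β−1)})`
for `t ∈ (0, T^β)`, then `∫_0^∞ t^{−(1+δ)} p(t) dt ≥ c·D^{−(α+δβ)}` with
`c = c(α,β,δ,C₁,C₂) > 0` independent of `T` and `D`. -/
theorem stmt_19 (α β δ C₁ C₂ : ℝ) (hα : 0 < α) (hβ : 1 < β)
    (hδ : δ ∈ Set.Ioo (0 : ℝ) 1) (hC₁ : 0 < C₁) (hC₂ : 0 < C₂) :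
    ∃ c : ℝ, 0 < c ∧
      ∀ (T D : ℝ) (p : ℝ → ℝ), 0 < T → 0 < D → D ≤ T →
        Measurable p → (∀ t, 0 ≤ p t) →
        (∀ t ∈ Set.Ioo (0 : ℝ) (T ^ β),
          C₁ * t ^ (-(α / β)) * Real.exp (-(C₂ * (D * t ^ (-(1 / β))) ^ (β / (β - 1)))) ≤ p t) →
        ENNReal.ofReal (c * D ^ (-(α + δ * β)))
          ≤ ∫⁻ t in Set.Ioi (0 : ℝ), ENNReal.ofReal (t ^ (-(1 + δ)) * p t) := by
  obtain ⟨hδ0, hδ1⟩ := hδ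
  have hβ0 : (0:ℝ) < β := by linarith
  have hβ1 : (0:ℝ) < β - 1 := by linarith
  set E : ℝ := Real.exp (-(C₂ * 2 ^ (1 / (β - 1)))) with hEdef
  have hE0 : 0 < E := Real.exp_pos _
  refine ⟨C₁ * E / 2, by positivity, ?_⟩
  intro T D p hT hD hDT hp hp0 hlow
  have hDβ : 0 < D ^ β := Real.rpow_pos_of_pos hD β
  set a : ℝ := D ^ β / 2 with hadef
  have ha0 : 0 < a := by positivity
  set K : ℝ := C₁ * E * (D ^ β) ^ (-(1 + δ)) * D ^ (-α) with hKdef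
  have hK0 : 0 < K := by
    have := Real.rpow_pos_of_pos hDβ (-(1+δ))
    have := Real.rpow_pos_of_pos hD (-α)
    positivity
  -- pointwise bound on the interval
  have key : ∀ t ∈ Ioo a (D ^ β), K ≤ t ^ (-(1 + δ)) * p t := by
    intro t ht
    obtain ⟨ht1, ht2⟩ := ht
    have ht0 : 0 < t := lt_trans ha0 ht1
    have htT : t < T ^ β := lt_of_lt_of_le ht2 (Real.rpow_le_rpow hD.le hDT hβ0.le)
    have hpt := hlow t ⟨ht0, htT⟩
    -- t^{-(1+δ)} ≥ (D^β)^{-(1+δ)}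
    have h2 : (D ^ β) ^ (-(1 + δ)) ≤ t ^ (-(1 + δ)) :=
      Real.rpow_le_rpow_of_nonpos ht0 ht2.le (by linarith)
    -- t^{-(α/β)} ≥ D^{-α}
    have h3 : D ^ (-α) ≤ t ^ (-(α / β)) := by
      have : (D ^ β) ^ (-(α / β)) ≤ t ^ (-(α / β)) :=
        Real.rpow_le_rpow_of_nonpos ht0 ht2.le (by
          have : 0 < α / β := div_pos hα hβ0
          linarith)
      refine le_trans (le_of_eq ?_) this
      rw [← Real.rpow_mul hD.le]
      congr 1
      field_simp
    -- exponential term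
    have h4 : E ≤ Real.exp (-(C₂ * (D * t ^ (-(1 / β))) ^ (β / (β - 1)))) := by
      rw [hEdef]
      apply Real.exp_le_exp.mpr
      apply neg_le_neg
      apply mul_le_mul_of_nonneg_left _ hC₂.le
      have hbase : D * t ^ (-(1 / β)) ≤ 2 ^ (1 / β : ℝ) := by
        have h5 : t ^ (-(1 / β)) ≤ a ^ (-(1 / β)) :=
          Real.rpow_le_rpow_of_nonpos ha0 ht1.le (by
            have : 0 < 1 / β := by positivity
            linarith)
        have h6 : a ^ (-(1 / β)) = 2 ^ (1 / β : ℝ) / D := by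
          rw [hadef, Real.div_rpow hDβ.le (by norm_num), ← Real.rpow_mul hD.le,
            Real.rpow_neg (by norm_num : (0:ℝ) ≤ 2),
            show β * -(1 / β) = -1 by field_simp, Real.rpow_neg_one]
          field_simp
        calc D * t ^ (-(1 / β)) ≤ D * (2 ^ (1 / β : ℝ) / D) := by
              apply mul_le_mul_of_nonneg_left _ hD.le
              rw [← h6]; exact h5
          _ = 2 ^ (1 / β : ℝ) := by field_simp
      have hbnn : 0 ≤ D * t ^ (-(1 / β)) := by
        have := Real.rpow_pos_of_pos ht0 (-(1/β))
        positivity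
      calc (D * t ^ (-(1 / β))) ^ (β / (β - 1))
          ≤ ((2:ℝ) ^ (1 / β : ℝ)) ^ (β / (β - 1)) :=
            Real.rpow_le_rpow hbnn hbase (by positivity)
        _ = 2 ^ (1 / (β - 1) : ℝ) := by
            rw [← Real.rpow_mul (by norm_num : (0:ℝ) ≤ 2)]
            congr 1
            field_simp
    -- combine
    have h1 : C₁ * D ^ (-α) * E ≤ p t := by
      refine le_trans ?_ hpt
      have := Real.rpow_pos_of_pos hD (-α)
      gcongr
    have hKeq : K = (D ^ β) ^ (-(1 + δ)) * (C₁ * D ^ (-α) * E) := by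
      rw [hKdef]; ring
    rw [hKeq]
    exact mul_le_mul h2 h1 (by positivity) (Real.rpow_pos_of_pos ht0 _).le
  -- lower bound the integral by the integral over the interval
  have hmeas : Measurable fun t : ℝ => ENNReal.ofReal (t ^ (-(1 + δ)) * p t) := by
    apply Measurable.ennreal_ofReal
    exact Measurable.mul (by fun_prop) hp
  have step1 : ∫⁻ t in Ioo a (D ^ β), ENNReal.ofReal (t ^ (-(1 + δ)) * p t)
      ≤ ∫⁻ t in Ioi (0:ℝ), ENNReal.ofReal (t ^ (-(1 + δ)) * p t) := by
    apply lintegral_mono_set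
    intro t ht
    exact lt_trans ha0 ht.1
  have step2 : ENNReal.ofReal K * volume (Ioo a (D ^ β))
      ≤ ∫⁻ t in Ioo a (D ^ β), ENNReal.ofReal (t ^ (-(1 + δ)) * p t) := by
    rw [← setLIntegral_const]
    apply setLIntegral_mono hmeas
    intro t ht
    exact ENNReal.ofReal_le_ofReal (key t ht)
  have hvol : volume (Ioo a (D ^ β)) = ENNReal.ofReal (D ^ β / 2) := by
    rw [Real.volume_Ioo, hadef]
    congr 1
    ring
  refine le_trans ?_ (le_trans step2 step1)
  rw [hvol, ← ENNReal.ofReal_mul hK0.le]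
  apply ENNReal.ofReal_le_ofReal
  have hexp : (D ^ β) ^ (-(1 + δ)) * D ^ (-α) * D ^ β = D ^ (-(α + δ * β)) := by
    rw [← Real.rpow_mul hD.le, ← Real.rpow_add hD, ← Real.rpow_add hD]
    congr 1
    ring
  calc C₁ * E / 2 * D ^ (-(α + δ * β))
      = C₁ * E / 2 * ((D ^ β) ^ (-(1 + δ)) * D ^ (-α) * D ^ β) := by rw [hexp]
    _ = K * (D ^ β / 2) := by rw [hKdef]; ring
    _ ≤ K * (D ^ β / 2) := le_rfl
end
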